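/- There exists a 3-agent cardinal hedonic game with deviator-resentful agents admitting an infinite sequence of individually rational contractual Nash deviations under additively separable aggregation. Concretely, with N = {a,b,c}, initial utilities u_a(b)=u_b(c)=u_c(a)=0 and u_b(a)=u_c(b)=u_a(c)=−1, the periodic sequence of partitions π^{3k}={{a,b},{c}}, π^{3k+1}={{a},{b,c}}, π^{3k+2}={{a,c},{b}} is an infinite execution of the individually rational CNS dynamics. -/

import Mathlib

/-- The partition at time `t` of the periodic sequence
`π^{3k} = {{a,b},{c}}`, `π^{3k+1} = {{a},{b,c}}`, `π^{3k+2} = {{a,c},{b}}`,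
given by the coalition of each agent (`a = 0`, `b = 1`, `c = 2`). -/
def coalOf (t : ℕ) (i : Fin 3) : Finset (Fin 3) :=
  if t % 3 = 0 then (if i = 2 then {2} else {0, 1})
  else if t % 3 = 1 then (if i = 0 then {0} else {1, 2})
  else (if i = 1 then {1} else {0, 2})

/-- The agent deviating at step `t` (the single-agent deviation turning the
partition at time `t - 1` into the one at time `t`): `b` at steps `≡ 1`,
`c` at steps `≡ 2`, `a` at steps `≡ 0 (mod 3)`. -/
def dev (t : ℕ) : Fin 3 :=
  if t % 3 = 1 then 1 else if t % 3 = 2 then 2 else 0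

/-- Initial utilities: `u_a(b) = u_b(c) = u_c(a) = 0`, `u_b(a) = u_c(b) = u_a(c) = -1`. -/
def u0 : Fin 3 → Fin 3 → ℚ := ![![0, 0, -1], ![-1, 0, 0], ![0, -1, 0]]

/-- Utilities evolving under deviator-resent: when an agent deviates, she
decreases her own utility for every agent of her abandoned coalition by `1`. -/
def util : ℕ → Fin 3 → Fin 3 → ℚ
  | 0 => u0
  | (t + 1) => fun i j =>
      if i = dev (t + 1) ∧ j ∈ coalOf t i ∧ j ≠ i then util t i j - 1
      else util t i j

lemma zeros : ∀ t : ℕ, util t 0 1 = 0 ∧ util t 1 2 = 0 ∧ util t 2 0 = 0 := by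
  intro t
  induction t with
  | zero => refine ⟨?_, ?_, ?_⟩ <;> simp [util, u0]
  | succ t ih =>
    have h : t % 3 = 0 ∨ t % 3 = 1 ∨ t % 3 = 2 := by omega
    rcases h with h | h | h <;>
      have h1 : (t + 1) % 3 = (t % 3 + 1) % 3 := by omega
    all_goals
      refine ⟨?_, ?_, ?_⟩ <;>
        simp [util, dev, coalOf, h, h1, Fin.ext_iff, ih.1, ih.2.1, ih.2.2]

lemma negs : ∀ t : ℕ, util t 0 2 < 0 ∧ util t 1 0 < 0 ∧ util t 2 1 < 0 := by
  intro t
  induction t with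
  | zero => refine ⟨?_, ?_, ?_⟩ <;> norm_num [util, u0] <;> exact (by norm_num : (-1:ℚ) < 0)
  | succ t ih =>
    refine ⟨?_, ?_, ?_⟩ <;> simp only [util] <;> split
    · linarith [ih.1]
    · exact ih.1
    · linarith [ih.2.1]
    · exact ih.2.1
    · linarith [ih.2.2]
    · exact ih.2.2

/-- The periodic sequence of partitions is an infinite execution of the
individually rational contractual Nash dynamics for deviator-resentful agents
with additively separable utilities: at each step, the deviator strictly
improves her (current) utility, every agent of the abandoned coalition weakly
improves, and the deviator's new coalition is individually rational for her. -/
theorem stmt_12 :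
    ∀ t : ℕ,
      ((∑ j ∈ (coalOf t (dev (t + 1))).erase (dev (t + 1)), util t (dev (t + 1)) j) <
        ∑ j ∈ (coalOf (t + 1) (dev (t + 1))).erase (dev (t + 1)), util t (dev (t + 1)) j) ∧
      (∀ i ∈ coalOf t (dev (t + 1)), i ≠ dev (t + 1) →
        (∑ j ∈ (coalOf t i).erase i, util t i j) ≤
          ∑ j ∈ (coalOf (t + 1) i).erase i, util t i j) ∧
      0 ≤ ∑ j ∈ (coalOf (t + 1) (dev (t + 1))).erase (dev (t + 1)), util t (dev (t + 1)) j := by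
  intro t
  obtain ⟨z1, z2, z3⟩ := zeros t
  obtain ⟨n1, n2, n3⟩ := negs t
  have h : t % 3 = 0 ∨ t % 3 = 1 ∨ t % 3 = 2 := by omega
  rcases h with h | h | h
  · have h1 : (t + 1) % 3 = 1 := by omega
    have hd : dev (t + 1) = 1 := by simp [dev, h1]
    have hc1 : coalOf t 1 = {0, 1} := by simp [coalOf, h]
    have hc2 : coalOf (t + 1) 1 = {1, 2} := by simp [coalOf, h1]
    have hc3 : coalOf t 0 = {0, 1} := by simp [coalOf, h]
    have hc4 : coalOf (t + 1) 0 = {0} := by simp [coalOf, h1]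
    have e1 : ({0, 1} : Finset (Fin 3)).erase 1 = {0} := by decide
    have e2 : ({1, 2} : Finset (Fin 3)).erase 1 = {2} := by decide
    have e3 : ({0, 1} : Finset (Fin 3)).erase 0 = {1} := by decide
    have e4 : ({0} : Finset (Fin 3)).erase 0 = ∅ := by decide
    rw [hd, hc1, hc2, e1, e2]
    refine ⟨?_, ?_, ?_⟩
    · rw [Finset.sum_singleton, Finset.sum_singleton, z2]
      exact n2
    · intro i hi hne
      have : i = 0 := by fin_cases i <;> simp_all
      subst this
      rw [hc3, hc4, e3, e4, Finset.sum_singleton, Finset.sum_empty, z1]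
    · rw [Finset.sum_singleton, z2]
  · have h1 : (t + 1) % 3 = 2 := by omega
    have hd : dev (t + 1) = 2 := by simp [dev, h1]
    have hc1 : coalOf t 2 = {1, 2} := by simp [coalOf, h]
    have hc2 : coalOf (t + 1) 2 = {0, 2} := by simp [coalOf, h1]
    have hc3 : coalOf t 1 = {1, 2} := by simp [coalOf, h]
    have hc4 : coalOf (t + 1) 1 = {1} := by simp [coalOf, h1]
    have e1 : ({1, 2} : Finset (Fin 3)).erase 2 = {1} := by decide
    have e2 : ({0, 2} : Finset (Fin 3)).erase 2 = {0} := by decide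
    have e3 : ({1, 2} : Finset (Fin 3)).erase 1 = {2} := by decide
    have e4 : ({1} : Finset (Fin 3)).erase 1 = ∅ := by decide
    rw [hd, hc1, hc2, e1, e2]
    refine ⟨?_, ?_, ?_⟩
    · rw [Finset.sum_singleton, Finset.sum_singleton, z3]
      exact n3
    · intro i hi hne
      have : i = 1 := by fin_cases i <;> simp_all
      subst this
      rw [hc3, hc4, e3, e4, Finset.sum_singleton, Finset.sum_empty, z2]
    · rw [Finset.sum_singleton, z3]
  · have h1 : (t + 1) % 3 = 0 := by omega
    have hd : dev (t + 1) = 0 := by simp [dev, h1]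
    have hc1 : coalOf t 0 = {0, 2} := by simp [coalOf, h]
    have hc2 : coalOf (t + 1) 0 = {0, 1} := by simp [coalOf, h1]
    have hc3 : coalOf t 2 = {0, 2} := by simp [coalOf, h]
    have hc4 : coalOf (t + 1) 2 = {2} := by simp [coalOf, h1]
    have e1 : ({0, 2} : Finset (Fin 3)).erase 0 = {2} := by decide
    have e2 : ({0, 1} : Finset (Fin 3)).erase 0 = {1} := by decide
    have e3 : ({0, 2} : Finset (Fin 3)).erase 2 = {0} := by decide
    have e4 : ({2} : Finset (Fin 3)).erase 2 = ∅ := by decide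
    rw [hd, hc1, hc2, e1, e2]
    refine ⟨?_, ?_, ?_⟩
    · rw [Finset.sum_singleton, Finset.sum_singleton, z1]
      exact n1
    · intro i hi hne
      have : i = 2 := by fin_cases i <;> simp_all
      subst this
      rw [hc3, hc4, e3, e4, Finset.sum_singleton, Finset.sum_empty, z3]
    · rw [Finset.sum_singleton, z1]
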